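/- Let n ≥ 2, 0 ≤ s ≤ n, and ε > 0. For e ∈ S^{n-1} and a finite set P ⊆ ℝ^n, define E_e(P) = |{(x,y) ∈ P × P : |⟨x, e⟩ − ⟨y, e⟩| ≤ δ}|. Then there exist a constant C ≥ 1 depending only on n and s, and δ_0 > 0 depending only on n, s and ε, such that for all 0 < δ < δ_0 and every (δ^{-ε}, δ, s)-set P ⊆ B(0,1) ⊆ ℝ^n: ∫_{S^{n-1}} E_e(P) dσ(e) ≤ C δ^{1 - 2s - 2ε} if 1 < s ≤ n, and ∫_{S^{n-1}} E_e(P) dσ(e) ≤ C δ^{-s - 3ε} if 0 ≤ s ≤ 1. -/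

import Mathlib

open Metric MeasureTheory ENNReal

/-- The uniform (rotation-invariant) probability measure on the unit sphere
`S^{n-1} ⊆ ℝ^n`, obtained by normalising the surface measure `volume.toSphere`. -/
noncomputable def sphereMeasure (n : ℕ) :
    Measure (sphere (0 : EuclideanSpace ℝ (Fin n)) 1) :=
  ((volume : Measure (EuclideanSpace ℝ (Fin n))).toSphere Set.univ)⁻¹ •
    (volume : Measure (EuclideanSpace ℝ (Fin n))).toSphere

/-- `coverNum A δ` is the least number of closed balls of radius `δ` needed to cover `A`
(as a value in `ℝ≥0∞`; it is `⊤` if no finite cover exists). -/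
noncomputable def coverNum {X : Type*} [PseudoMetricSpace X] (A : Set X) (δ : ℝ) : ℝ≥0∞ :=
  ⨅ (s : Finset X) (_ : A ⊆ ⋃ x ∈ s, closedBall x δ), (s.card : ℝ≥0∞)

/-- The `s`-dimensional Hausdorff content `H^s_∞`. -/
noncomputable def hausdorffContent {n : ℕ} (s : ℝ) (A : Set (EuclideanSpace ℝ (Fin n))) : ℝ≥0∞ :=
  ⨅ (U : ℕ → Set (EuclideanSpace ℝ (Fin n))) (_ : A ⊆ ⋃ i, U i), ∑' i, EMetric.diam (U i) ^ s

/-- A finite set `P ⊆ ℝ^n` is a `(C,δ,s)`-set if `|P ∩ B(x,r)| ≤ C (r/δ)^s` for all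
`x ∈ ℝ^n` and all `δ ≤ r ≤ 1`, where `B(x,r)` is the closed ball. -/
def IsDeltaSet {n : ℕ} (C δ s : ℝ) (P : Finset (EuclideanSpace ℝ (Fin n))) : Prop :=
  ∀ (x : EuclideanSpace ℝ (Fin n)) (r : ℝ), δ ≤ r → r ≤ 1 →
    (((P : Set (EuclideanSpace ℝ (Fin n))) ∩ closedBall x r).ncard : ℝ) ≤ C * (r / δ) ^ s

/-- `energyCount δ e P` is the number of pairs `(x,y) ∈ P × P` with `|⟨x,e⟩ - ⟨y,e⟩| ≤ δ`. -/
noncomputable def energyCount {n : ℕ} (δ : ℝ) (e : EuclideanSpace ℝ (Fin n))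
    (P : Finset (EuclideanSpace ℝ (Fin n))) : ℕ :=
  {p : EuclideanSpace ℝ (Fin n) × EuclideanSpace ℝ (Fin n) |
    p.1 ∈ P ∧ p.2 ∈ P ∧ |(inner ℝ p.1 e : ℝ) - (inner ℝ p.2 e : ℝ)| ≤ δ}.ncard



section AuxEnergy
open Pointwise Filter Module

lemma coord_le_norm {n : ℕ} (y : EuclideanSpace ℝ (Fin n)) (i : Fin n) : |y i| ≤ ‖y‖ := by
  rw [EuclideanSpace.norm_eq]
  rw [← Real.sqrt_sq_eq_abs]
  apply Real.sqrt_le_sqrt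
  have : y i ^ 2 = ‖y i‖ ^ 2 := by rw [Real.norm_eq_abs, sq_abs]
  rw [this]
  exact Finset.single_le_sum (f := fun i => ‖y i‖ ^ 2) (fun j _ => by positivity) (Finset.mem_univ i)

lemma slab_volume (n : ℕ) (hn : 1 ≤ n) (u : EuclideanSpace ℝ (Fin n)) (hu : ‖u‖ = 1)
    (a : ℝ) (ha : 0 ≤ a) :
    volume {x : EuclideanSpace ℝ (Fin n) | |(inner ℝ u x : ℝ)| ≤ a ∧ ‖x‖ ≤ 1} ≤
      ENNReal.ofReal (2 * a) * (ENNReal.ofReal 2) ^ (n - 1) := by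
  have hcard : finrank ℝ (EuclideanSpace ℝ (Fin n)) = Fintype.card (Fin n) := by
    simp [finrank_euclideanSpace_fin]
  have i0 : Fin n := ⟨0, hn⟩
  have horth : Orthonormal ℝ (Set.restrict {i0} (fun _ : Fin n => u)) := by
    constructor
    · rintro ⟨i, hi⟩; exact hu
    · rintro ⟨i, hi⟩ ⟨j, hj⟩ hij
      simp only [Set.mem_singleton_iff] at hi hj
      subst hi; subst hj
      exact absurd rfl hij
  obtain ⟨b, hb⟩ := horth.exists_orthonormalBasis_extension_of_card_eq hcard
  have hb0 : b i0 = u := hb i0 rfl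
  set f : (EuclideanSpace ℝ (Fin n)) ≃ₗᵢ[ℝ] EuclideanSpace ℝ (Fin n) := b.repr with hf
  set B : Set (EuclideanSpace ℝ (Fin n)) := {y | |y i0| ≤ a ∧ ∀ i, |y i| ≤ 1} with hB
  have hsub : {x : EuclideanSpace ℝ (Fin n) | |(inner ℝ u x : ℝ)| ≤ a ∧ ‖x‖ ≤ 1} ⊆ f ⁻¹' B := by
    rintro x ⟨h1, h2⟩
    constructor
    · have : (f x) i0 = (inner ℝ u x : ℝ) := by
        rw [← hb0]; exact b.repr_apply_apply x i0
      rwa [this]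
    · intro i
      calc |(f x) i| ≤ ‖f x‖ := coord_le_norm _ _
        _ = ‖x‖ := f.norm_map x
        _ ≤ 1 := h2
  -- now compute/bound volume of B
  have hmp := f.measurePreserving
  have hcoord : ∀ i : Fin n, Measurable fun y : EuclideanSpace ℝ (Fin n) => y i :=
    fun i => (EuclideanSpace.proj (𝕜 := ℝ) i).continuous.measurable
  have hBmeas : MeasurableSet B := by
    have h1 : MeasurableSet {y : EuclideanSpace ℝ (Fin n) | |y i0| ≤ a} :=
      measurableSet_le (hcoord i0).abs measurable_const
    have h2 : MeasurableSet {y : EuclideanSpace ℝ (Fin n) | ∀ i, |y i| ≤ 1} := by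
      rw [Set.setOf_forall]
      exact MeasurableSet.iInter fun i =>
        measurableSet_le ((hcoord i).abs) measurable_const
    exact h1.inter h2
  calc volume {x : EuclideanSpace ℝ (Fin n) | |(inner ℝ u x : ℝ)| ≤ a ∧ ‖x‖ ≤ 1}
      ≤ volume (f ⁻¹' B) := measure_mono hsub
    _ = volume B := hmp.measure_preimage hBmeas.nullMeasurableSet
    _ ≤ ENNReal.ofReal (2 * a) * (ENNReal.ofReal 2) ^ (n - 1) := by
        classical
        set c : Fin n → ℝ := fun i => if i = i0 then a else 1 with hc
        set B' : Set (Fin n → ℝ) := Set.univ.pi (fun i => Set.Icc (-(c i)) (c i)) with hB'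
        have hmp2 := EuclideanSpace.volume_preserving_symm_measurableEquiv_toLp (Fin n)
        have hB'meas : MeasurableSet B' := MeasurableSet.univ_pi fun i => measurableSet_Icc
        have hsub2 : B ⊆ (MeasurableEquiv.toLp 2 (Fin n → ℝ)).symm ⁻¹' B' := by
          rintro y ⟨h1, h2⟩ i _
          simp only [Set.mem_Icc, hc]
          by_cases hii : i = i0
          · subst hii
            simp only [if_pos rfl]
            exact abs_le.mp h1
          · simp only [if_neg hii]
            exact abs_le.mp (h2 i)
        calc volume B ≤ volume ((MeasurableEquiv.toLp 2 (Fin n → ℝ)).symm ⁻¹' B') :=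
              measure_mono hsub2
          _ = volume B' := hmp2.measure_preimage hB'meas.nullMeasurableSet
          _ = ∏ i, volume (Set.Icc (-(c i)) (c i)) := volume_pi_pi _
          _ = ∏ i, ENNReal.ofReal (2 * c i) := by
              refine Finset.prod_congr rfl fun i _ => ?_
              rw [Real.volume_Icc]
              ring_nf
          _ ≤ ENNReal.ofReal (2 * a) * (ENNReal.ofReal 2) ^ (n - 1) := by
              rw [← Finset.mul_prod_erase (Finset.univ) _ (Finset.mem_univ i0)]
              have h1 : (2 : ℝ) * c i0 = 2 * a := by simp [hc]
              rw [h1]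
              gcongr with i hi
              · rw [Finset.prod_congr rfl (fun i hi => by
                  rw [show (2:ℝ) * c i = 2 by
                    simp only [hc, if_neg (Finset.ne_of_mem_erase hi)]; ring])]
                rw [Finset.prod_const, Finset.card_erase_of_mem (Finset.mem_univ i0),
                  Finset.card_univ, Fintype.card_fin]

noncomputable def sphC (n : ℕ) : ℝ :=
  2 ^ n / (volume (ball (0 : EuclideanSpace ℝ (Fin n)) 1)).toReal

lemma vball_pos (n : ℕ) : 0 < (volume (ball (0 : EuclideanSpace ℝ (Fin n)) 1)).toReal := by
  apply ENNReal.toReal_pos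
  · exact (measure_ball_pos volume 0 one_pos).ne'
  · exact measure_ball_lt_top.ne

lemma sphC_pos (n : ℕ) : 0 < sphC n := by
  apply div_pos (by positivity) (vball_pos n)

lemma cap_measure (n : ℕ) (hn : 1 ≤ n) (v : (EuclideanSpace ℝ (Fin n))) (hv : v ≠ 0)
    (δ : ℝ) (hδ : 0 ≤ δ) :
    (sphereMeasure n {e : sphere (0 : (EuclideanSpace ℝ (Fin n))) 1 |
        |(inner ℝ v (e : (EuclideanSpace ℝ (Fin n))) : ℝ)| ≤ δ}).toReal ≤ sphC n * δ / ‖v‖ := by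
  have hvnorm : (0 : ℝ) < ‖v‖ := norm_pos_iff.mpr hv
  set A : Set (sphere (0 : (EuclideanSpace ℝ (Fin n))) 1) :=
    {e : sphere (0 : (EuclideanSpace ℝ (Fin n))) 1 | |(inner ℝ v (e : (EuclideanSpace ℝ (Fin n))) : ℝ)| ≤ δ} with hA
  have hAmeas : MeasurableSet A := by
    have hcont : Continuous fun e : sphere (0 : (EuclideanSpace ℝ (Fin n))) 1 => |(inner ℝ v (e : (EuclideanSpace ℝ (Fin n))) : ℝ)| :=
      (continuous_const.inner continuous_subtype_val).abs
    exact measurableSet_le hcont.measurable measurable_const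
  have hdim : finrank ℝ (EuclideanSpace ℝ (Fin n)) = n := finrank_euclideanSpace_fin
  set V : ℝ≥0∞ := volume (ball (0 : (EuclideanSpace ℝ (Fin n))) 1) with hV
  have hTA : (volume : Measure (EuclideanSpace ℝ (Fin n))).toSphere A =
      n * volume (Set.Ioo (0:ℝ) 1 • ((↑) '' A : Set (EuclideanSpace ℝ (Fin n)))) := by
    rw [Measure.toSphere_apply' _ hAmeas, hdim]
  have hTU : (volume : Measure (EuclideanSpace ℝ (Fin n))).toSphere Set.univ = n * V := by
    rw [Measure.toSphere_apply_univ, hdim]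
  -- inclusion into the slab
  set u : (EuclideanSpace ℝ (Fin n)) := ‖v‖⁻¹ • v with hu
  have hunorm : ‖u‖ = 1 := by
    rw [hu, norm_smul, norm_inv, norm_norm, inv_mul_cancel₀ hvnorm.ne']
  set a : ℝ := δ / ‖v‖ with ha
  have hsub : (Set.Ioo (0:ℝ) 1 • ((↑) '' A : Set (EuclideanSpace ℝ (Fin n)))) ⊆
      {x : (EuclideanSpace ℝ (Fin n)) | |(inner ℝ u x : ℝ)| ≤ a ∧ ‖x‖ ≤ 1} := by
    rintro z hz
    rw [Set.mem_smul] at hz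
    obtain ⟨r, hr, x, hx, rfl⟩ := hz
    obtain ⟨e, heA, rfl⟩ := hx
    obtain ⟨hr0, hr1⟩ := hr
    constructor
    · have h1 : (inner ℝ u (r • (e : (EuclideanSpace ℝ (Fin n)))) : ℝ) = ‖v‖⁻¹ * (r * (inner ℝ v (e : (EuclideanSpace ℝ (Fin n))) : ℝ)) := by
        rw [hu, real_inner_smul_left, real_inner_smul_right]
      rw [h1, ha, abs_mul, abs_mul]
      rw [abs_of_nonneg (by positivity : (0:ℝ) ≤ ‖v‖⁻¹), abs_of_nonneg hr0.le]
      rw [div_eq_inv_mul]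
      apply mul_le_mul_of_nonneg_left _ (by positivity)
      calc r * |(inner ℝ v (e : (EuclideanSpace ℝ (Fin n))) : ℝ)| ≤ 1 * |(inner ℝ v (e : (EuclideanSpace ℝ (Fin n))) : ℝ)| := by
            apply mul_le_mul_of_nonneg_right hr1.le (abs_nonneg _)
        _ = |(inner ℝ v (e : (EuclideanSpace ℝ (Fin n))) : ℝ)| := one_mul _
        _ ≤ δ := heA
    · have : ‖(e : (EuclideanSpace ℝ (Fin n)))‖ = 1 := by
        have := mem_sphere_zero_iff_norm.mp e.2
        exact this
      rw [norm_smul, this, mul_one, Real.norm_eq_abs, abs_of_nonneg hr0.le]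
      exact hr1.le
  have hslab := slab_volume n hn u hunorm a (by positivity)
  -- put it together
  have hσ : sphereMeasure n A = ((volume : Measure (EuclideanSpace ℝ (Fin n))).toSphere Set.univ)⁻¹ *
      (volume : Measure (EuclideanSpace ℝ (Fin n))).toSphere A := by
    rw [sphereMeasure, Measure.smul_apply, smul_eq_mul]
  have hUB : (volume : Measure (EuclideanSpace ℝ (Fin n))).toSphere A ≤
      n * (ENNReal.ofReal (2 * a) * (ENNReal.ofReal 2) ^ (n - 1)) := by
    rw [hTA]
    exact mul_le_mul_right (le_trans (measure_mono hsub) hslab) _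
  have hUBfin : (n : ℝ≥0∞) * (ENNReal.ofReal (2 * a) * (ENNReal.ofReal 2) ^ (n - 1)) ≠ ⊤ :=
    ENNReal.mul_ne_top (ENNReal.natCast_ne_top n)
      (ENNReal.mul_ne_top ENNReal.ofReal_ne_top (ENNReal.pow_ne_top ENNReal.ofReal_ne_top))
  have hTUtoReal : ((volume : Measure (EuclideanSpace ℝ (Fin n))).toSphere Set.univ).toReal = n * V.toReal := by
    rw [hTU, ENNReal.toReal_mul, show ((n:ℝ≥0∞)).toReal = (n:ℝ) from rfl]
  rw [hσ, ENNReal.toReal_mul, ENNReal.toReal_inv, hTUtoReal]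
  have hbound : ((volume : Measure (EuclideanSpace ℝ (Fin n))).toSphere A).toReal ≤ n * (2 * a * 2 ^ (n - 1)) := by
    have := ENNReal.toReal_mono hUBfin hUB
    rwa [ENNReal.toReal_mul, show ((n:ℝ≥0∞)).toReal = (n:ℝ) from rfl, ENNReal.toReal_mul,
      ENNReal.toReal_ofReal (by positivity), ENNReal.toReal_pow,
      ENNReal.toReal_ofReal (by norm_num : (0:ℝ) ≤ 2)] at this
  calc (↑n * V.toReal)⁻¹ * ((volume : Measure (EuclideanSpace ℝ (Fin n))).toSphere A).toReal
      ≤ (↑n * V.toReal)⁻¹ * (n * (2 * a * 2 ^ (n - 1))) := by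
        apply mul_le_mul_of_nonneg_left hbound
        positivity
    _ = sphC n * δ / ‖v‖ := by
        have hn0 : (0:ℝ) < n := by exact_mod_cast hn
        have hv0 := vball_pos n
        have h2 : (2:ℝ) * 2 ^ (n-1) = 2 ^ n := by
          rw [← pow_succ']
          congr 1
          omega
        have h3 : (2:ℝ) * a * 2 ^ (n-1) = 2 ^ n * a := by rw [← h2]; ring
        rw [h3, sphC, ha]
        rw [mul_inv]
        field_simp
        ring_nf
        exact mul_inv_cancel_right₀ hv0.ne' δ

lemma sphere_prob (n : ℕ) (hn : 1 ≤ n) : IsProbabilityMeasure (sphereMeasure n) := by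
  constructor
  have hdim : finrank ℝ (EuclideanSpace ℝ (Fin n)) = n := finrank_euclideanSpace_fin
  have hTU : (volume : Measure (EuclideanSpace ℝ (Fin n))).toSphere Set.univ =
      n * volume (ball (0 : EuclideanSpace ℝ (Fin n)) 1) := by
    rw [Measure.toSphere_apply_univ, hdim]
  have h0 : (volume : Measure (EuclideanSpace ℝ (Fin n))).toSphere Set.univ ≠ 0 := by
    rw [hTU]
    apply mul_ne_zero
    · simp only [ne_eq, Nat.cast_eq_zero]
      omega
    · exact (measure_ball_pos volume 0 one_pos).ne'
  have htop : (volume : Measure (EuclideanSpace ℝ (Fin n))).toSphere Set.univ ≠ ⊤ := by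
    rw [hTU]
    exact ENNReal.mul_ne_top (ENNReal.natCast_ne_top n) measure_ball_lt_top.ne
  rw [sphereMeasure, Measure.smul_apply, smul_eq_mul, ENNReal.inv_mul_cancel h0 htop]

/-- the cap set for a pair -/
def pairCap {n : ℕ} (δ : ℝ) (p : EuclideanSpace ℝ (Fin n) × EuclideanSpace ℝ (Fin n)) :
    Set (sphere (0 : EuclideanSpace ℝ (Fin n)) 1) :=
  {e | |(inner ℝ p.1 (e : EuclideanSpace ℝ (Fin n)) : ℝ) -
        (inner ℝ p.2 (e : EuclideanSpace ℝ (Fin n)) : ℝ)| ≤ δ}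

lemma pairCap_meas {n : ℕ} (δ : ℝ) (p : EuclideanSpace ℝ (Fin n) × EuclideanSpace ℝ (Fin n)) :
    MeasurableSet (pairCap δ p) := by
  have hcont : Continuous fun e : sphere (0 : EuclideanSpace ℝ (Fin n)) 1 =>
      |(inner ℝ p.1 (e : EuclideanSpace ℝ (Fin n)) : ℝ) -
        (inner ℝ p.2 (e : EuclideanSpace ℝ (Fin n)) : ℝ)| :=
    ((continuous_const.inner continuous_subtype_val).sub
      (continuous_const.inner continuous_subtype_val)).abs
  exact measurableSet_le hcont.measurable measurable_const

lemma energy_integral (n : ℕ) (hn : 1 ≤ n) (δ : ℝ) (P : Finset (EuclideanSpace ℝ (Fin n))) :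
    ∫ e, (energyCount δ (e : EuclideanSpace ℝ (Fin n)) P : ℝ) ∂(sphereMeasure n) =
      ∑ p ∈ P ×ˢ P, ((sphereMeasure n) (pairCap δ p)).toReal := by
  classical
  haveI := sphere_prob n hn
  have hfun : ∀ e : sphere (0 : EuclideanSpace ℝ (Fin n)) 1,
      (energyCount δ (e : EuclideanSpace ℝ (Fin n)) P : ℝ) =
      ∑ p ∈ P ×ˢ P, Set.indicator (pairCap δ p) (fun _ => (1:ℝ)) e := by
    intro e
    have hset : {p : EuclideanSpace ℝ (Fin n) × EuclideanSpace ℝ (Fin n) |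
        p.1 ∈ P ∧ p.2 ∈ P ∧ |(inner ℝ p.1 (e : EuclideanSpace ℝ (Fin n)) : ℝ) -
          (inner ℝ p.2 (e : EuclideanSpace ℝ (Fin n)) : ℝ)| ≤ δ} =
        ↑((P ×ˢ P).filter fun p => |(inner ℝ p.1 (e : EuclideanSpace ℝ (Fin n)) : ℝ) -
          (inner ℝ p.2 (e : EuclideanSpace ℝ (Fin n)) : ℝ)| ≤ δ) := by
      ext p
      simp [Finset.mem_filter, Finset.mem_product, and_assoc]
    rw [energyCount, hset, Set.ncard_coe_finset]
    rw [Finset.card_filter]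
    push_cast
    refine Finset.sum_congr rfl fun p _ => ?_
    simp only [Set.indicator_apply, pairCap, Set.mem_setOf_eq]
  rw [MeasureTheory.integral_congr_ae (Filter.Eventually.of_forall hfun)]
  rw [MeasureTheory.integral_finset_sum]
  · refine Finset.sum_congr rfl fun p _ => ?_
    rw [MeasureTheory.integral_indicator_const (1:ℝ) (pairCap_meas δ p), smul_eq_mul, mul_one, measureReal_def]
  · intro p _
    exact (integrable_const (1:ℝ)).indicator (pairCap_meas δ p)

lemma pairCap_bound (n : ℕ) (hn : 1 ≤ n) (δ : ℝ) (hδ : 0 < δ)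
    (p : EuclideanSpace ℝ (Fin n) × EuclideanSpace ℝ (Fin n)) :
    ((sphereMeasure n) (pairCap δ p)).toReal ≤
      (max (sphC n) 1) * (δ / max (dist p.1 p.2) δ) := by
  haveI := sphere_prob n hn
  have hre : pairCap δ p = {e : sphere (0 : EuclideanSpace ℝ (Fin n)) 1 |
      |(inner ℝ (p.1 - p.2) (e : EuclideanSpace ℝ (Fin n)) : ℝ)| ≤ δ} := by
    ext e
    simp [pairCap, inner_sub_left]
  by_cases h : dist p.1 p.2 ≤ δ
  · have h1 : ((sphereMeasure n) (pairCap δ p)).toReal ≤ 1 := by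
      have := prob_le_one (μ := sphereMeasure n) (s := pairCap δ p)
      have h2 := ENNReal.toReal_mono one_ne_top this
      simpa using h2
    have h3 : max (dist p.1 p.2) δ = δ := max_eq_right h
    rw [h3, div_self hδ.ne', mul_one]
    exact le_trans h1 (le_max_right _ _)
  · push_neg at h
    have hd : dist p.1 p.2 = ‖p.1 - p.2‖ := dist_eq_norm _ _
    have hv : p.1 - p.2 ≠ 0 := by
      intro h0
      rw [hd, h0, norm_zero] at h
      linarith
    have h3 : max (dist p.1 p.2) δ = dist p.1 p.2 := max_eq_left h.le
    rw [hre]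
    calc ((sphereMeasure n) _).toReal ≤ sphC n * δ / ‖p.1 - p.2‖ :=
          cap_measure n hn _ hv δ hδ.le
      _ = sphC n * (δ / max (dist p.1 p.2) δ) := by
          rw [h3, hd, mul_div_assoc]
      _ ≤ (max (sphC n) 1) * (δ / max (dist p.1 p.2) δ) := by
          apply mul_le_mul_of_nonneg_right (le_max_left _ _)
          positivity

-- find the dyadic scale
lemma find_scale (K : ℕ) : ∀ r : ℝ, 2 / 2 ^ (K + 1) < r → r ≤ 2 →
    ∃ j ≤ K, 2 / 2 ^ (j + 1) < r ∧ r ≤ 2 / 2 ^ j := by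
  induction K with
  | zero => intro r h1 h2; exact ⟨0, le_refl _, by simpa using h1, by simpa using h2⟩
  | succ K ih =>
    intro r h1 h2
    by_cases h : 2 / 2 ^ (K + 1) < r
    · obtain ⟨j, hj, hj1, hj2⟩ := ih r h h2
      exact ⟨j, hj.trans (Nat.le_succ K), hj1, hj2⟩
    · exact ⟨K + 1, le_refl _, h1, not_lt.mp h⟩

lemma dyadic_pointwise (K : ℕ) (δ : ℝ) (hδ0 : 0 < δ) (hK1 : δ * 2 ^ K ≤ 1)
    (hK2 : 1 < δ * 2 ^ (K + 1)) (r : ℝ) (hr0 : 0 ≤ r) (hr2 : r ≤ 2) :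
    δ / max r δ ≤ ∑ k ∈ Finset.range (K + 2), δ * 2 ^ k * (if r ≤ 2 / 2 ^ k then 1 else 0) := by
  have hterm_nonneg : ∀ k ∈ Finset.range (K + 2),
      0 ≤ δ * 2 ^ k * (if r ≤ 2 / 2 ^ k then 1 else 0) := by
    intro k _
    have : (0:ℝ) ≤ (if r ≤ 2 / 2 ^ k then (1:ℝ) else 0) := by positivity
    positivity
  by_cases hcase : 2 / 2 ^ (K + 1) < r
  · -- r in a dyadic shell; here max r δ = r
    obtain ⟨j, hjK, hj1, hj2⟩ := find_scale K r hcase hr2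
    have hδK : δ ≤ 2 / 2 ^ (K + 1) := by
      rw [le_div_iff₀ (by positivity)]
      calc δ * 2 ^ (K + 1) = (δ * 2 ^ K) * 2 := by ring
        _ ≤ 1 * 2 := by gcongr
        _ = 2 := one_mul 2
    have hδr : δ ≤ r := le_of_lt (lt_of_le_of_lt hδK hcase)
    have hr0' : (0:ℝ) < r := lt_of_lt_of_le hδ0 hδr
    rw [max_eq_left hδr]
    have hsingle : δ * 2 ^ j * (if r ≤ 2 / 2 ^ j then 1 else 0) ≤
        ∑ k ∈ Finset.range (K + 2), δ * 2 ^ k * (if r ≤ 2 / 2 ^ k then 1 else 0) :=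
      Finset.single_le_sum hterm_nonneg (Finset.mem_range.mpr (by omega))
    rw [if_pos hj2, mul_one] at hsingle
    refine le_trans ?_ hsingle
    rw [div_le_iff₀ hr0']
    have h1 : (1:ℝ) / 2 ^ j < r := by
      have : (2:ℝ) / 2 ^ (j + 1) = 1 / 2 ^ j := by
        rw [pow_succ]; ring
      rwa [this] at hj1
    rw [one_div] at h1
    calc δ = δ * ((2 ^ j)⁻¹ * 2 ^ j) := by
          rw [inv_mul_cancel₀ (by positivity : ((2:ℝ) ^ j) ≠ 0), mul_one]
      _ = (δ * 2 ^ j) * (2 ^ j)⁻¹ := by ring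
      _ ≤ (δ * 2 ^ j) * r := by
          have hpos : (0:ℝ) ≤ δ * 2 ^ j := by positivity
          exact mul_le_mul_of_nonneg_left h1.le hpos
  · -- r small: the sum is at least δ * (2^(K+2)-1) ≥ 1
    push_neg at hcase
    have hsingle : δ * 2 ^ (K+1) * (if r ≤ 2 / 2 ^ (K+1) then 1 else 0) ≤
        ∑ k ∈ Finset.range (K + 2), δ * 2 ^ k * (if r ≤ 2 / 2 ^ k then 1 else 0) :=
      Finset.single_le_sum hterm_nonneg (by simp)
    rw [if_pos hcase, mul_one] at hsingle
    refine le_trans ?_ (le_trans hK2.le hsingle)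
    rw [div_le_one (lt_max_of_lt_right hδ0)]
    exact le_max_right r δ


lemma count_in_ball {n : ℕ} (P : Finset (EuclideanSpace ℝ (Fin n)))
    (x : EuclideanSpace ℝ (Fin n)) (r : ℝ) :
    ((P.filter fun y => dist x y ≤ r).card : ℝ) =
      (((P : Set (EuclideanSpace ℝ (Fin n))) ∩ closedBall x r).ncard : ℝ) := by
  classical
  have : ((P : Set (EuclideanSpace ℝ (Fin n))) ∩ closedBall x r) =
      ↑(P.filter fun y => dist x y ≤ r) := by
    ext y
    simp [Finset.mem_filter, mem_closedBall, dist_comm]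
  rw [this, Set.ncard_coe_finset]

lemma sum_over_y {n : ℕ} (P : Finset (EuclideanSpace ℝ (Fin n)))
    (hP : (P : Set (EuclideanSpace ℝ (Fin n))) ⊆ closedBall 0 1)
    (s Cd δ : ℝ) (hs0 : 0 ≤ s) (hδ0 : 0 < δ) (hCd : 0 ≤ Cd)
    (hdelta : IsDeltaSet Cd δ s P)
    (K : ℕ) (hK1 : δ * 2 ^ K ≤ 1) (hK2 : 1 < δ * 2 ^ (K + 1))
    (x : EuclideanSpace ℝ (Fin n)) (hx : x ∈ P) :
    ∑ y ∈ P, δ / max (dist x y) δ ≤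
      Cd * δ * (2 / δ) ^ s * ∑ k ∈ Finset.range (K + 2), ((2:ℝ) ^ (1 - s)) ^ k := by
  classical
  have hdist2 : ∀ y ∈ P, dist x y ≤ 2 := by
    intro y hy
    have hx1 : dist x 0 ≤ 1 := mem_closedBall.mp (hP hx)
    have hy1 : dist y 0 ≤ 1 := mem_closedBall.mp (hP hy)
    calc dist x y ≤ dist x 0 + dist 0 y := dist_triangle _ _ _
      _ ≤ 1 + 1 := by rw [dist_comm 0 y]; exact add_le_add hx1 hy1
      _ = 2 := by norm_num
  -- step 1: pointwise dyadic bound and swap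
  have step1 : ∑ y ∈ P, δ / max (dist x y) δ ≤
      ∑ k ∈ Finset.range (K + 2), δ * 2 ^ k *
        ((P.filter fun y => dist x y ≤ 2 / 2 ^ k).card : ℝ) := by
    calc ∑ y ∈ P, δ / max (dist x y) δ
        ≤ ∑ y ∈ P, ∑ k ∈ Finset.range (K + 2),
            δ * 2 ^ k * (if dist x y ≤ 2 / 2 ^ k then 1 else 0) := by
          refine Finset.sum_le_sum fun y hy => ?_
          exact dyadic_pointwise K δ hδ0 hK1 hK2 (dist x y) dist_nonneg (hdist2 y hy)
      _ = ∑ k ∈ Finset.range (K + 2), ∑ y ∈ P,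
            δ * 2 ^ k * (if dist x y ≤ 2 / 2 ^ k then 1 else 0) := Finset.sum_comm
      _ = ∑ k ∈ Finset.range (K + 2), δ * 2 ^ k *
            ((P.filter fun y => dist x y ≤ 2 / 2 ^ k).card : ℝ) := by
          refine Finset.sum_congr rfl fun k _ => ?_
          rw [← Finset.mul_sum]
          congr 1
          rw [Finset.sum_boole]
  -- step 2: count bound per scale
  have hδ2 : δ ≤ 2 / 2 ^ (K + 1) := by
    rw [le_div_iff₀ (by positivity)]
    calc δ * 2 ^ (K + 1) = (δ * 2 ^ K) * 2 := by ring
      _ ≤ 1 * 2 := by gcongr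
      _ = 2 := one_mul 2
  have step2 : ∀ k ∈ Finset.range (K + 2),
      ((P.filter fun y => dist x y ≤ 2 / 2 ^ k).card : ℝ) ≤ Cd * ((2 / 2 ^ k) / δ) ^ s := by
    intro k hk
    have hkK : k ≤ K + 1 := Nat.lt_succ_iff.mp (Finset.mem_range.mp hk)
    have hδr : δ ≤ 2 / 2 ^ k := by
      refine le_trans hδ2 ?_
      apply div_le_div_of_nonneg_left (by norm_num) (by positivity)
      exact pow_le_pow_right₀ (by norm_num) hkK
    rcases Nat.eq_zero_or_pos k with hk0 | hk1
    · subst hk0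
      simp only [pow_zero]
      have hsub : (P.filter fun y => dist x y ≤ 2 / 1).card ≤ P.card :=
        Finset.card_filter_le _ _
      have hPcard : ((P.card : ℝ)) ≤ Cd * (1 / δ) ^ s := by
        have h1 : ((P : Set (EuclideanSpace ℝ (Fin n))) ∩ closedBall 0 1) = ↑P :=
          Set.inter_eq_left.mpr hP
        have hδ1 : δ ≤ 1 := by
          refine le_trans hδ2 ?_
          rw [div_le_one (by positivity)]
          calc (2:ℝ) = 2 ^ 1 := (pow_one 2).symm
            _ ≤ 2 ^ (K+1) := pow_le_pow_right₀ (by norm_num) (by omega)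
        have := hdelta 0 1 hδ1 le_rfl
        rw [h1, Set.ncard_coe_finset] at this
        exact this
      calc ((P.filter fun y => dist x y ≤ 2 / 1).card : ℝ) ≤ (P.card : ℝ) := by
            exact_mod_cast hsub
        _ ≤ Cd * (1 / δ) ^ s := hPcard
        _ ≤ Cd * ((2 / 1) / δ) ^ s := by
            have h12 : (1:ℝ)/δ ≤ (2/1)/δ := by gcongr <;> norm_num
            exact mul_le_mul_of_nonneg_left
              (Real.rpow_le_rpow (by positivity) h12 hs0) hCd
    · have hr1 : 2 / (2:ℝ) ^ k ≤ 1 := by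
        rw [div_le_one (by positivity)]
        calc (2:ℝ) = 2 ^ 1 := (pow_one 2).symm
          _ ≤ 2 ^ k := pow_le_pow_right₀ (by norm_num) hk1
      rw [count_in_ball]
      exact hdelta x _ hδr hr1
  -- step 3: rewrite terms
  have step3 : ∀ k ∈ Finset.range (K + 2),
      δ * 2 ^ k * (Cd * ((2 / 2 ^ k) / δ) ^ s) =
      Cd * δ * (2 / δ) ^ s * ((2:ℝ) ^ (1 - s)) ^ k := by
    intro k _
    have h2k : (0:ℝ) < 2 ^ k := by positivity
    have hfrac : (2 / (2:ℝ) ^ k) / δ = (2 / δ) / 2 ^ k := by ring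
    rw [hfrac, Real.div_rpow (by positivity) h2k.le]
    have hpow : ((2:ℝ) ^ k) ^ s = (2:ℝ) ^ ((k:ℝ) * s) := by
      rw [← Real.rpow_natCast 2 k, ← Real.rpow_mul (by norm_num)]
    have hpow2 : ((2:ℝ) ^ (1 - s)) ^ k = (2:ℝ) ^ ((1 - s) * (k:ℝ)) := by
      rw [← Real.rpow_natCast ((2:ℝ) ^ (1-s)) k, ← Real.rpow_mul (by norm_num)]
    have hsplit : (2:ℝ) ^ ((1 - s) * (k:ℝ)) = 2 ^ (k:ℝ) * (2 ^ ((k:ℝ) * s))⁻¹ := by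
      rw [← Real.rpow_neg (by norm_num : (0:ℝ) ≤ 2), ← Real.rpow_add (by norm_num : (0:ℝ) < 2)]
      ring_nf
    have h2kc : (2:ℝ) ^ (k:ℝ) = 2 ^ k := Real.rpow_natCast 2 k
    rw [hpow, hpow2, hsplit, h2kc]
    have hne : (2:ℝ) ^ ((k:ℝ) * s) ≠ 0 := (Real.rpow_pos_of_pos (by norm_num) _).ne'
    field_simp
  calc ∑ y ∈ P, δ / max (dist x y) δ
      ≤ ∑ k ∈ Finset.range (K + 2), δ * 2 ^ k *
          ((P.filter fun y => dist x y ≤ 2 / 2 ^ k).card : ℝ) := step1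
    _ ≤ ∑ k ∈ Finset.range (K + 2), δ * 2 ^ k * (Cd * ((2 / 2 ^ k) / δ) ^ s) := by
        refine Finset.sum_le_sum fun k hk => ?_
        have h0 : (0:ℝ) ≤ δ * 2 ^ k := by positivity
        exact mul_le_mul_of_nonneg_left (step2 k hk) h0
    _ = ∑ k ∈ Finset.range (K + 2), Cd * δ * (2 / δ) ^ s * ((2:ℝ) ^ (1 - s)) ^ k :=
        Finset.sum_congr rfl step3
    _ = Cd * δ * (2 / δ) ^ s * ∑ k ∈ Finset.range (K + 2), ((2:ℝ) ^ (1 - s)) ^ k := by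
        rw [Finset.mul_sum]

lemma exists_K (δ : ℝ) (h0 : 0 < δ) (h1 : δ ≤ 1) :
    ∃ K : ℕ, δ * 2 ^ K ≤ 1 ∧ 1 < δ * 2 ^ (K + 1) := by
  have hex : ∃ n : ℕ, 1 / δ < 2 ^ n := pow_unbounded_of_one_lt (1/δ) one_lt_two
  classical
  set N := Nat.find hex with hN
  have hNp : 1 / δ < 2 ^ N := Nat.find_spec hex
  have hN1 : 1 ≤ N := by
    by_contra h
    push_neg at h
    interval_cases N
    have h2 : (1:ℝ) ≤ 1 / δ := by
      rw [le_div_iff₀ h0]; linarith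
    simp only [pow_zero] at hNp
    linarith
  refine ⟨N - 1, ?_, ?_⟩
  · have hmin : ¬ (1 / δ < 2 ^ (N - 1)) := Nat.find_min hex (by omega)
    push_neg at hmin
    rw [le_div_iff₀ h0] at hmin
    linarith
  · have : N - 1 + 1 = N := by omega
    rw [this]
    rw [div_lt_iff₀ h0] at hNp
    nlinarith [pow_pos (show (0:ℝ) < 2 by norm_num) N]

lemma eventually_K (ε : ℝ) (hε : 0 < ε) :
    ∃ K0 : ℕ, ∀ K : ℕ, K0 ≤ K → (K : ℝ) + 2 ≤ ((2:ℝ) ^ ε) ^ K := by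
  have hR : (1:ℝ) < 2 ^ ε := Real.one_lt_rpow_iff_of_pos (by norm_num) |>.mpr (by norm_num; exact hε)
  have h1 : (fun K : ℕ => (K:ℝ) ^ 1) =o[atTop] fun K : ℕ => ((2:ℝ)^ε) ^ K :=
    isLittleO_pow_const_const_pow_of_one_lt 1 hR
  have h2 : ∀ᶠ K : ℕ in atTop, (K:ℝ) ≤ (1/4) * ((2:ℝ)^ε) ^ K := by
    have := h1.def (by norm_num : (0:ℝ) < 1/4)
    filter_upwards [this] with K hK
    rw [Real.norm_eq_abs, Real.norm_eq_abs, pow_one] at hK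
    rw [abs_of_nonneg (by positivity), abs_of_nonneg (by positivity)] at hK
    linarith
  have h3 : Tendsto (fun K : ℕ => ((2:ℝ)^ε) ^ K) atTop atTop :=
    tendsto_pow_atTop_atTop_of_one_lt hR
  have h4 : ∀ᶠ K : ℕ in atTop, (4:ℝ) ≤ ((2:ℝ)^ε) ^ K := h3.eventually_ge_atTop 4
  obtain ⟨K0, hK0⟩ := (h2.and h4).exists_forall_of_atTop
  exact ⟨K0, fun K hK => by
    obtain ⟨ha, hb⟩ := hK0 K hK
    nlinarith⟩

end AuxEnergy

/-- Integral energy estimate: for a `(δ^{-ε},δ,s)`-set `P ⊆ B(0,1)`,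
`∫ E_e(P) dσ(e) ≤ C δ^{1-2s-2ε}` if `1 < s`, and `≤ C δ^{-s-3ε}` if `s ≤ 1`. -/
theorem statement6 (n : ℕ) (hn : 2 ≤ n) (s : ℝ) (hs0 : 0 ≤ s) (hsn : s ≤ n) :
    ∃ C ≥ (1 : ℝ), ∀ ε : ℝ, 0 < ε → ∃ δ0 > (0 : ℝ), ∀ δ : ℝ, 0 < δ → δ < δ0 →
      ∀ P : Finset (EuclideanSpace ℝ (Fin n)),
        (P : Set (EuclideanSpace ℝ (Fin n))) ⊆ closedBall 0 1 →
        IsDeltaSet (δ ^ (-ε)) δ s P →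
        ((1 < s →
            ∫ e, (energyCount δ (e : EuclideanSpace ℝ (Fin n)) P : ℝ) ∂(sphereMeasure n) ≤
              C * δ ^ (1 - 2 * s - 2 * ε)) ∧
         (s ≤ 1 →
            ∫ e, (energyCount δ (e : EuclideanSpace ℝ (Fin n)) P : ℝ) ∂(sphereMeasure n) ≤
              C * δ ^ (-s - 3 * ε))) := by
  classical
  have hn1 : 1 ≤ n := by omega
  set C1 : ℝ := max (sphC n) 1 with hC1def
  have hC1 : 1 ≤ C1 := le_max_right _ _
  have hC1nn : 0 ≤ C1 := by linarith
  set Cg : ℝ := max ((1 - (2:ℝ) ^ ((1:ℝ) - s))⁻¹) 2 with hCgdef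
  have hCg2 : 2 ≤ Cg := le_max_right _ _
  set Cfin : ℝ := max 1 (C1 * 2 ^ s * Cg) with hCfin
  have h2s : (0:ℝ) < 2 ^ s := Real.rpow_pos_of_pos (by norm_num) s
  refine ⟨Cfin, le_max_left _ _, ?_⟩
  intro ε hε
  obtain ⟨K0, hK0⟩ := eventually_K ε hε
  refine ⟨min 1 ((2:ℝ)⁻¹ ^ K0), lt_min one_pos (by positivity), ?_⟩
  intro δ hδ0 hδlt P hP hdelta
  have hδ1 : δ ≤ 1 := le_of_lt (lt_of_lt_of_le hδlt (min_le_left _ _))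
  obtain ⟨K, hK1, hK2⟩ := exists_K δ hδ0 hδ1
  have hKK0 : K0 ≤ K := by
    by_contra hcon
    push_neg at hcon
    have h1 : ((2:ℝ)⁻¹) ^ K0 ≤ (2⁻¹ : ℝ) ^ (K + 1) :=
      pow_le_pow_of_le_one (by norm_num) (by norm_num) (by omega)
    have h2 : δ < ((2:ℝ)⁻¹) ^ (K + 1) :=
      lt_of_lt_of_le (lt_of_lt_of_le hδlt (min_le_right _ _)) h1
    rw [inv_pow] at h2
    have h3 : δ * 2 ^ (K + 1) < 1 := by
      have hb : (0:ℝ) < 2 ^ (K + 1) := by positivity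
      have h4 := mul_lt_mul_of_pos_right h2 hb
      rwa [inv_mul_cancel₀ hb.ne'] at h4
    linarith
  -- K + 2 ≤ δ ^ (-ε)
  have h2K : (2:ℝ) ^ K ≤ 1 / δ := by
    rw [le_div_iff₀ hδ0]; linarith [hK1]
  have hKbound : (K:ℝ) + 2 ≤ δ ^ (-ε) := by
    calc (K:ℝ) + 2 ≤ ((2:ℝ) ^ ε) ^ K := hK0 K hKK0
      _ = ((2:ℝ) ^ K) ^ ε := by
          rw [← Real.rpow_natCast ((2:ℝ) ^ ε) K, ← Real.rpow_natCast (2:ℝ) K,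
            ← Real.rpow_mul (by norm_num), ← Real.rpow_mul (by norm_num), mul_comm]
      _ ≤ (1 / δ) ^ ε := Real.rpow_le_rpow (by positivity) h2K hε.le
      _ = δ ^ (-ε) := by
          rw [one_div, ← Real.rpow_neg_one δ, ← Real.rpow_mul hδ0.le]
          ring_nf
  set Cd : ℝ := δ ^ (-ε) with hCddef
  have hCdpos : 0 < Cd := Real.rpow_pos_of_pos hδ0 _
  set q : ℝ := (2:ℝ) ^ ((1:ℝ) - s) with hqdef
  have hq0 : 0 ≤ q := (Real.rpow_pos_of_pos (by norm_num) _).le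
  set G : ℝ := ∑ k ∈ Finset.range (K + 2), q ^ k with hGdef
  have hGnn : 0 ≤ G := Finset.sum_nonneg fun k _ => pow_nonneg hq0 k
  -- card bound
  have hcard : (P.card : ℝ) ≤ Cd * (1 / δ) ^ s := by
    have h1 : ((P : Set (EuclideanSpace ℝ (Fin n))) ∩ closedBall 0 1) = ↑P :=
      Set.inter_eq_left.mpr hP
    have := hdelta 0 1 hδ1 le_rfl
    rw [h1, Set.ncard_coe_finset] at this
    exact this
  -- main chain
  have hrow : ∀ x ∈ P, ∑ y ∈ P, δ / max (dist x y) δ ≤ Cd * δ * (2 / δ) ^ s * G :=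
    fun x hx => sum_over_y P hP s Cd δ hs0 hδ0 hCdpos.le hdelta K hK1 hK2 x hx
  have hrow0 : 0 ≤ Cd * δ * (2 / δ) ^ s * G := by positivity
  have hmain : ∫ e, (energyCount δ (e : EuclideanSpace ℝ (Fin n)) P : ℝ) ∂(sphereMeasure n) ≤
      C1 * ((Cd * (1 / δ) ^ s) * (Cd * δ * (2 / δ) ^ s * G)) := by
    rw [energy_integral n hn1 δ P]
    calc ∑ p ∈ P ×ˢ P, ((sphereMeasure n) (pairCap δ p)).toReal
        ≤ ∑ p ∈ P ×ˢ P, C1 * (δ / max (dist p.1 p.2) δ) :=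
          Finset.sum_le_sum fun p _ => pairCap_bound n hn1 δ hδ0 p
      _ = C1 * ∑ p ∈ P ×ˢ P, δ / max (dist p.1 p.2) δ := by rw [Finset.mul_sum]
      _ = C1 * ∑ x ∈ P, ∑ y ∈ P, δ / max (dist x y) δ := by rw [Finset.sum_product]
      _ ≤ C1 * ∑ x ∈ P, (Cd * δ * (2 / δ) ^ s * G) := by
          exact mul_le_mul_of_nonneg_left (Finset.sum_le_sum hrow) hC1nn
      _ = C1 * ((P.card : ℝ) * (Cd * δ * (2 / δ) ^ s * G)) := by
          rw [Finset.sum_const, nsmul_eq_mul]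
      _ ≤ C1 * ((Cd * (1 / δ) ^ s) * (Cd * δ * (2 / δ) ^ s * G)) := by
          exact mul_le_mul_of_nonneg_left (mul_le_mul_of_nonneg_right hcard hrow0) hC1nn
  -- algebra: collapse the rpow's
  have e1 : (1 / δ) ^ s = δ ^ (-s) := by
    rw [one_div, ← Real.rpow_neg_one δ, ← Real.rpow_mul hδ0.le]
    ring_nf
  have e2 : (2 / δ) ^ s = 2 ^ s * δ ^ (-s) := by
    rw [div_eq_mul_inv, Real.mul_rpow (by norm_num) (by positivity), ← Real.rpow_neg_one δ,
      ← Real.rpow_mul hδ0.le]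
    ring_nf
  have key : Cd * δ ^ (-s) * (Cd * δ * δ ^ (-s)) = δ ^ (1 - 2*s - 2*ε) := by
    rw [hCddef]
    have h : δ ^ (1 - 2*s - 2*ε) = δ ^ (-ε) * δ ^ (-s) * (δ ^ (-ε) * δ ^ (1:ℝ) * δ ^ (-s)) := by
      rw [show (1 - 2*s - 2*ε) = (-ε) + (-s) + ((-ε) + 1 + (-s)) by ring]
      rw [Real.rpow_add hδ0, Real.rpow_add hδ0, Real.rpow_add hδ0, Real.rpow_add hδ0]
    rw [h, Real.rpow_one]
  have halg : C1 * ((Cd * (1 / δ) ^ s) * (Cd * δ * (2 / δ) ^ s * G)) =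
      (C1 * 2 ^ s) * (δ ^ (1 - 2*s - 2*ε) * G) := by
    rw [e1, e2, ← key]
    ring
  rw [halg] at hmain
  have hδE : 0 < δ ^ (1 - 2*s - 2*ε) := Real.rpow_pos_of_pos hδ0 _
  constructor
  · -- case 1 < s
    intro hs1
    have hq1 : q < 1 := Real.rpow_lt_one_of_one_lt_of_neg one_lt_two (by linarith)
    have hGle : G ≤ (1 - q)⁻¹ := by
      rw [hGdef]
      calc ∑ k ∈ Finset.range (K + 2), q ^ k
          ≤ ∑' k : ℕ, q ^ k := by
            refine Summable.sum_le_tsum _ (fun k _ => pow_nonneg hq0 k) ?_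
            exact summable_geometric_of_lt_one hq0 hq1
        _ = (1 - q)⁻¹ := tsum_geometric_of_lt_one hq0 hq1
    have hGle2 : G ≤ Cg := le_trans hGle (le_max_left _ _)
    calc ∫ e, (energyCount δ (e : EuclideanSpace ℝ (Fin n)) P : ℝ) ∂(sphereMeasure n)
        ≤ (C1 * 2 ^ s) * (δ ^ (1 - 2*s - 2*ε) * G) := hmain
      _ ≤ (C1 * 2 ^ s) * (δ ^ (1 - 2*s - 2*ε) * Cg) := by
          apply mul_le_mul_of_nonneg_left _ (by positivity)
          exact mul_le_mul_of_nonneg_left hGle2 hδE.le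
      _ = (C1 * 2 ^ s * Cg) * δ ^ (1 - 2*s - 2*ε) := by ring
      _ ≤ Cfin * δ ^ (1 - 2*s - 2*ε) := by
          exact mul_le_mul_of_nonneg_right (le_max_right _ _) hδE.le
  · -- case s ≤ 1
    intro hs1
    have hq1 : 1 ≤ q := Real.one_le_rpow one_le_two (by linarith)
    have hGle : G ≤ ((K:ℝ) + 2) * q ^ (K + 1) := by
      rw [hGdef]
      calc ∑ k ∈ Finset.range (K + 2), q ^ k
          ≤ ∑ _k ∈ Finset.range (K + 2), q ^ (K + 1) := by
            refine Finset.sum_le_sum fun k hk => ?_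
            exact pow_le_pow_right₀ hq1 (Nat.lt_succ_iff.mp (Finset.mem_range.mp hk))
        _ = ((K:ℝ) + 2) * q ^ (K + 1) := by
            rw [Finset.sum_const, Finset.card_range, nsmul_eq_mul]
            push_cast
            ring
    have hqK : q ^ (K + 1) ≤ 2 ^ ((1:ℝ) - s) * δ ^ (s - 1) := by
      have h1 : q ^ (K + 1) = ((2:ℝ) ^ (K + 1) : ℝ) ^ ((1:ℝ) - s) := by
        rw [hqdef, ← Real.rpow_natCast ((2:ℝ) ^ ((1:ℝ)-s)) (K+1),
          ← Real.rpow_natCast (2:ℝ) (K+1), ← Real.rpow_mul (by norm_num),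
          ← Real.rpow_mul (by norm_num), mul_comm]
      have h2 : (2:ℝ) ^ (K + 1) ≤ 2 / δ := by
        rw [pow_succ, div_eq_mul_inv]
        calc (2:ℝ) ^ K * 2 ≤ (1/δ) * 2 := by
              apply mul_le_mul_of_nonneg_right h2K (by norm_num)
          _ = 2 * δ⁻¹ := by rw [one_div]; ring
      have h3 : ((2:ℝ) ^ (K + 1) : ℝ) ^ ((1:ℝ) - s) ≤ (2 / δ) ^ ((1:ℝ) - s) :=
        Real.rpow_le_rpow (by positivity) h2 (by linarith)
      have h4 : (2 / δ) ^ ((1:ℝ) - s) = 2 ^ ((1:ℝ) - s) * δ ^ (s - 1) := by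
        rw [div_eq_mul_inv, Real.mul_rpow (by norm_num) (by positivity),
          ← Real.rpow_neg_one δ, ← Real.rpow_mul hδ0.le]
        ring_nf
      rw [h1]
      rw [h4] at h3
      exact h3
    have h2e : (2:ℝ) ^ ((1:ℝ) - s) ≤ 2 := by
      calc (2:ℝ) ^ ((1:ℝ) - s) ≤ 2 ^ (1:ℝ) :=
            Real.rpow_le_rpow_of_exponent_le one_le_two (by linarith)
        _ = 2 := Real.rpow_one 2
    have hGle2 : G ≤ Cd * (2 * δ ^ (s - 1)) := by
      have hδs1 : 0 < δ ^ (s - 1) := Real.rpow_pos_of_pos hδ0 _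
      calc G ≤ ((K:ℝ) + 2) * q ^ (K + 1) := hGle
        _ ≤ Cd * (2 ^ ((1:ℝ) - s) * δ ^ (s - 1)) := by
            apply mul_le_mul hKbound hqK (pow_nonneg hq0 _) hCdpos.le
        _ ≤ Cd * (2 * δ ^ (s - 1)) := by
            apply mul_le_mul_of_nonneg_left _ hCdpos.le
            exact mul_le_mul_of_nonneg_right h2e hδs1.le
    have keyexp : δ ^ (1 - 2*s - 2*ε) * (δ ^ (-ε) * (2 * δ ^ (s - 1))) =
        2 * δ ^ (-s - 3*ε) := by
      have h : δ ^ (-s - 3*ε) = δ ^ (1 - 2*s - 2*ε) * (δ ^ (-ε) * δ ^ (s - 1)) := by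
        rw [show (-s - 3*ε) = (1 - 2*s - 2*ε) + ((-ε) + (s - 1)) by ring]
        rw [Real.rpow_add hδ0, Real.rpow_add hδ0]
      rw [h]
      ring
    calc ∫ e, (energyCount δ (e : EuclideanSpace ℝ (Fin n)) P : ℝ) ∂(sphereMeasure n)
        ≤ (C1 * 2 ^ s) * (δ ^ (1 - 2*s - 2*ε) * G) := hmain
      _ ≤ (C1 * 2 ^ s) * (δ ^ (1 - 2*s - 2*ε) * (Cd * (2 * δ ^ (s - 1)))) := by
          apply mul_le_mul_of_nonneg_left _ (by positivity)
          exact mul_le_mul_of_nonneg_left hGle2 hδE.le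
      _ = (C1 * 2 ^ s) * (2 * δ ^ (-s - 3*ε)) := by rw [hCddef, keyexp]
      _ = (C1 * 2 ^ s * 2) * δ ^ (-s - 3*ε) := by ring
      _ ≤ Cfin * δ ^ (-s - 3*ε) := by
          apply mul_le_mul_of_nonneg_right _ (Real.rpow_pos_of_pos hδ0 _).le
          refine le_trans ?_ (le_max_right _ _)
          apply mul_le_mul_of_nonneg_left hCg2 (by positivity)
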